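/- For every positive integer k, there exists N = N(k) such that every graph G containing both a clique of size N and an independent set of size N contains an induced subgraph isomorphic to S_k or to its complement, where S_k is the graph on 2k vertices consisting of a clique of size k together with k isolated vertices. -/

import Mathlib

/-- A set of vertices is independent if no two of its vertices are adjacent. -/
def SimpleGraph.IsIndepSet' {V : Type} (G : SimpleGraph V) (s : Set V) : Prop :=
  s.Pairwise fun a b => ¬ G.Adj a b

/-- `Sgraph k` is the graph on `2k` vertices consisting of a clique of size `k`
(the left summand) together with `k` isolated vertices (the right summand). -/
def Sgraph (k : ℕ) : SimpleGraph (Fin k ⊕ Fin k) :=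
  SimpleGraph.fromRel (fun u v => u.isLeft = true ∧ v.isLeft = true)

open Finset

lemma Sgraph_adj (k : ℕ) (a b : Fin k ⊕ Fin k) :
    (Sgraph k).Adj a b ↔ a ≠ b ∧ a.isLeft = true ∧ b.isLeft = true := by
  simp only [Sgraph, SimpleGraph.fromRel_adj]
  tauto

lemma step_lemma {V : Type} (G : SimpleGraph V) (k : ℕ) :
    ∀ m (C T0 : Finset V), (∀ v ∈ T0, v ∉ C) → k * 2 ^ m ≤ C.card → m ≤ T0.card →
    ∃ C', C' ⊆ C ∧ k ≤ C'.card ∧ ∃ T, T ⊆ T0 ∧ T.card = m ∧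
      ∀ v ∈ T, (∀ u ∈ C', G.Adj v u) ∨ (∀ u ∈ C', ¬ G.Adj v u) := by
  intro m
  induction m with
  | zero =>
    intro C T0 _ hC _
    exact ⟨C, Finset.Subset.rfl, by simpa using hC, ∅, Finset.empty_subset _, rfl, by simp⟩
  | succ m ih =>
    intro C T0 hdisj hC hT
    classical
    obtain ⟨v, hv⟩ : T0.Nonempty := Finset.card_pos.mp (by omega)
    set A := C.filter (fun u => G.Adj v u) with hAdef
    set B := C.filter (fun u => ¬ G.Adj v u) with hBdef
    have hsum : A.card + B.card = C.card := Finset.card_filter_add_card_filter_not _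
    have h2 : k * 2 ^ (m + 1) = k * 2 ^ m + k * 2 ^ m := by ring
    have hhalf : k * 2 ^ m ≤ A.card ∨ k * 2 ^ m ≤ B.card := by
      by_contra h
      push_neg at h
      rw [h2] at hC
      omega
    obtain ⟨D, hDsub, hDcard, hDuni⟩ :
        ∃ D, D ⊆ C ∧ k * 2 ^ m ≤ D.card ∧
          ((∀ u ∈ D, G.Adj v u) ∨ (∀ u ∈ D, ¬ G.Adj v u)) := by
      rcases hhalf with h | h
      · exact ⟨A, Finset.filter_subset _ _, h, Or.inl fun u hu => (Finset.mem_filter.mp hu).2⟩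
      · exact ⟨B, Finset.filter_subset _ _, h, Or.inr fun u hu => (Finset.mem_filter.mp hu).2⟩
    have hT0' : m ≤ (T0.erase v).card := by
      rw [Finset.card_erase_of_mem hv]; omega
    obtain ⟨C', hC'sub, hC'card, T, hTsub, hTcard, hTuni⟩ :=
      ih D (T0.erase v)
        (fun w hw hwC => hdisj w (Finset.mem_of_mem_erase hw) (hDsub hwC)) hDcard hT0'
    refine ⟨C', hC'sub.trans hDsub, hC'card, insert v T, ?_, ?_, ?_⟩
    · exact Finset.insert_subset hv (hTsub.trans (Finset.erase_subset _ _))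
    · rw [Finset.card_insert_of_notMem (fun h => (Finset.mem_erase.mp (hTsub h)).1 rfl), hTcard]
    · intro w hw
      rcases Finset.mem_insert.mp hw with rfl | hw'
      · rcases hDuni with h | h
        · exact Or.inl fun u hu => h u (hC'sub hu)
        · exact Or.inr fun u hu => h u (hC'sub hu)
      · exact hTuni w hw'

lemma embed_S {V : Type} (G : SimpleGraph V) (k : ℕ) (A B : Finset V)
    (hA : A.card = k) (hB : B.card = k) (hd : ∀ v ∈ B, v ∉ A)
    (hcl : ∀ a ∈ A, ∀ b ∈ A, a ≠ b → G.Adj a b)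
    (hind : ∀ a ∈ B, ∀ b ∈ B, a ≠ b → ¬ G.Adj a b)
    (hcross : ∀ a ∈ A, ∀ b ∈ B, ¬ G.Adj a b) :
    Nonempty (Sgraph k ↪g G) := by
  classical
  let eA : Fin k ≃ A := (finCongr hA.symm).trans A.equivFin.symm
  let eB : Fin k ≃ B := (finCongr hB.symm).trans B.equivFin.symm
  let f : Fin k ⊕ Fin k → V := Sum.elim (fun i => (eA i : V)) (fun i => (eB i : V))
  have hfA : ∀ i, f (Sum.inl i) ∈ A := fun i => (eA i).2
  have hfB : ∀ i, f (Sum.inr i) ∈ B := fun i => (eB i).2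
  have hinj : Function.Injective f := by
    intro a b hab
    match a, b with
    | Sum.inl i, Sum.inl j =>
      have : eA i = eA j := Subtype.ext hab
      exact congrArg Sum.inl (eA.injective this)
    | Sum.inl i, Sum.inr j =>
      exact absurd (hfA i) (hab ▸ hd _ (hfB j))
    | Sum.inr i, Sum.inl j =>
      exact absurd (hfA j) (hab ▸ hd _ (hfB i))
    | Sum.inr i, Sum.inr j =>
      have : eB i = eB j := Subtype.ext hab
      exact congrArg Sum.inr (eB.injective this)
  refine ⟨⟨⟨f, hinj⟩, ?_⟩⟩
  intro a b
  simp only [Function.Embedding.coeFn_mk, Sgraph_adj]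
  match a, b with
  | Sum.inl i, Sum.inl j =>
    constructor
    · intro h
      refine ⟨fun hij => G.ne_of_adj h (congrArg f hij), rfl, rfl⟩
    · rintro ⟨hne, -, -⟩
      refine hcl _ (hfA i) _ (hfA j) ?_
      intro hval
      exact hne (hinj hval)
  | Sum.inl i, Sum.inr j =>
    constructor
    · intro h
      exact absurd h (hcross _ (hfA i) _ (hfB j))
    · rintro ⟨-, -, h⟩
      simp at h
  | Sum.inr i, Sum.inl j =>
    constructor
    · intro h
      exact absurd h.symm (hcross _ (hfA j) _ (hfB i))
    · rintro ⟨-, h, -⟩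
      simp at h
  | Sum.inr i, Sum.inr j =>
    constructor
    · intro h
      refine absurd h (hind _ (hfB i) _ (hfB j) ?_)
      intro hval
      exact G.ne_of_adj h hval
    · rintro ⟨-, h, -⟩
      simp at h

lemma embed_coS {V : Type} (G : SimpleGraph V) (k : ℕ) (A B : Finset V)
    (hA : A.card = k) (hB : B.card = k) (hd : ∀ v ∈ B, v ∉ A)
    (hcl : ∀ a ∈ A, ∀ b ∈ A, a ≠ b → G.Adj a b)
    (hind : ∀ a ∈ B, ∀ b ∈ B, a ≠ b → ¬ G.Adj a b)
    (hcross : ∀ a ∈ A, ∀ b ∈ B, G.Adj a b) :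
    Nonempty ((Sgraph k)ᶜ ↪g G) := by
  classical
  -- left part (independent in complement of Sgraph? no: left part of Sgraphᶜ is independent)
  let eB : Fin k ≃ B := (finCongr hB.symm).trans B.equivFin.symm
  let eA : Fin k ≃ A := (finCongr hA.symm).trans A.equivFin.symm
  let f : Fin k ⊕ Fin k → V := Sum.elim (fun i => (eB i : V)) (fun i => (eA i : V))
  have hfB : ∀ i, f (Sum.inl i) ∈ B := fun i => (eB i).2
  have hfA : ∀ i, f (Sum.inr i) ∈ A := fun i => (eA i).2
  have hinj : Function.Injective f := by
    intro a b hab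
    match a, b with
    | Sum.inl i, Sum.inl j =>
      exact congrArg Sum.inl (eB.injective (Subtype.ext hab))
    | Sum.inl i, Sum.inr j =>
      exact absurd (hfA j) (hab ▸ hd _ (hfB i))
    | Sum.inr i, Sum.inl j =>
      exact absurd (hfA i) (hab.symm ▸ hd _ (hfB j))
    | Sum.inr i, Sum.inr j =>
      exact congrArg Sum.inr (eA.injective (Subtype.ext hab))
  refine ⟨⟨⟨f, hinj⟩, ?_⟩⟩
  intro a b
  simp only [Function.Embedding.coeFn_mk, SimpleGraph.compl_adj, Sgraph_adj]
  match a, b with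
  | Sum.inl i, Sum.inl j =>
    constructor
    · intro h
      exact absurd h (hind _ (hfB i) _ (hfB j) (fun hval => G.ne_of_adj h hval))
    · rintro ⟨hne, h⟩
      exact absurd ⟨fun hij => hne (congrArg Sum.inl (eB.injective (Subtype.ext (by
        exact congrArg Subtype.val (Subtype.ext (Sum.inl.inj hij ▸ rfl)))))), rfl, rfl⟩ h
  | Sum.inl i, Sum.inr j =>
    constructor
    · intro h
      exact ⟨by simp, by simp⟩
    · rintro ⟨-, -⟩
      exact (hcross _ (hfA j) _ (hfB i)).symm
  | Sum.inr i, Sum.inl j =>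
    constructor
    · intro h
      exact ⟨by simp, by simp⟩
    · rintro ⟨-, -⟩
      exact hcross _ (hfA i) _ (hfB j)
  | Sum.inr i, Sum.inr j =>
    constructor
    · intro h
      refine ⟨fun hij => G.ne_of_adj h (congrArg f hij), by simp⟩
    · rintro ⟨hne, -⟩
      exact hcl _ (hfA i) _ (hfA j) (fun hval => hne (hinj hval))

/-- For every positive `k` there is `N` such that every graph containing a clique of size `N`
and an independent set of size `N` contains `S_k` or its complement as an induced subgraph. -/
theorem clique_indep_implies_S_or_coS (k : ℕ) (hk : 0 < k) :
    ∃ N : ℕ, ∀ (V : Type) (G : SimpleGraph V),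
      (∃ s : Finset V, G.IsNClique N s) →
      (∃ s : Finset V, s.card = N ∧ G.IsIndepSet' (↑s : Set V)) →
      Nonempty (Sgraph k ↪g G) ∨ Nonempty ((Sgraph k)ᶜ ↪g G) := by
  classical
  refine ⟨k * 2 ^ (2 * k - 1) + 2 * k, ?_⟩
  set N := k * 2 ^ (2 * k - 1) + 2 * k with hN
  rintro V G ⟨s, hs⟩ ⟨t, htcard, htind⟩
  have hscard : s.card = N := hs.2
  have hsclique : ∀ a ∈ s, ∀ b ∈ s, a ≠ b → G.Adj a b := by
    intro a ha b hb hab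
    exact hs.1 ha hb hab
  have htindep : ∀ a ∈ t, ∀ b ∈ t, a ≠ b → ¬ G.Adj a b := by
    intro a ha b hb hab
    exact htind ha hb hab
  -- the clique and the independent set intersect in at most one vertex
  have hint : (t ∩ s).card ≤ 1 := by
    rw [Finset.card_le_one]
    intro a ha b hb
    by_contra hab
    have h1 := hsclique a (Finset.mem_inter.mp ha).2 b (Finset.mem_inter.mp hb).2 hab
    exact htindep a (Finset.mem_inter.mp ha).1 b (Finset.mem_inter.mp hb).1 hab h1
  have hsd : (t ∩ s).card + (t \ s).card = t.card := Finset.card_inter_add_card_sdiff t s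
  have hI' : 2 * k - 1 ≤ (t \ s).card := by omega
  obtain ⟨C', hC'sub, hC'card, T, hTsub, hTcard, hTuni⟩ :=
    step_lemma G k (2 * k - 1) s (t \ s)
      (fun v hv => (Finset.mem_sdiff.mp hv).2)
      (by omega) hI'
  -- pigeonhole on the type of each vertex of T
  set T1 := T.filter (fun v => ∀ u ∈ C', G.Adj v u) with hT1def
  set T2 := T.filter (fun v => ¬ ∀ u ∈ C', G.Adj v u) with hT2def
  have hsplit : T1.card + T2.card = T.card := Finset.card_filter_add_card_filter_not _
  have hone : k ≤ T1.card ∨ k ≤ T2.card := by omega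
  obtain ⟨A, hAsub, hAcard⟩ := Finset.exists_subset_card_eq hC'card
  have hAclique : ∀ a ∈ A, ∀ b ∈ A, a ≠ b → G.Adj a b := by
    intro a ha b hb hab
    exact hsclique a (hC'sub (hAsub ha)) b (hC'sub (hAsub hb)) hab
  have hAs : ∀ a ∈ A, a ∈ s := fun a ha => hC'sub (hAsub ha)
  rcases hone with h1 | h2
  · -- all edges between T1 and C' : complement of Sgraph
    obtain ⟨B, hBsub, hBcard⟩ := Finset.exists_subset_card_eq h1
    have hBt : ∀ b ∈ B, b ∈ t \ s := fun b hb => hTsub (Finset.mem_filter.mp (hBsub hb)).1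
    refine Or.inr (embed_coS G k A B hAcard hBcard ?_ hAclique ?_ ?_)
    · intro v hv hvA
      exact (Finset.mem_sdiff.mp (hBt v hv)).2 (hAs v hvA)
    · intro a ha b hb hab
      exact htindep a (Finset.mem_sdiff.mp (hBt a ha)).1 b (Finset.mem_sdiff.mp (hBt b hb)).1 hab
    · intro a ha b hb
      exact ((Finset.mem_filter.mp (hBsub hb)).2 a (hAsub ha)).symm
  · -- no edges between T2 and C' : Sgraph
    obtain ⟨B, hBsub, hBcard⟩ := Finset.exists_subset_card_eq h2
    have hBt : ∀ b ∈ B, b ∈ t \ s := fun b hb => hTsub (Finset.mem_filter.mp (hBsub hb)).1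
    have hBnone : ∀ b ∈ B, ∀ u ∈ C', ¬ G.Adj b u := by
      intro b hb
      have hmem := Finset.mem_filter.mp (hBsub hb)
      rcases hTuni b hmem.1 with h | h
      · exact absurd h hmem.2
      · exact h
    refine Or.inl (embed_S G k A B hAcard hBcard ?_ hAclique ?_ ?_)
    · intro v hv hvA
      exact (Finset.mem_sdiff.mp (hBt v hv)).2 (hAs v hvA)
    · intro a ha b hb hab
      exact htindep a (Finset.mem_sdiff.mp (hBt a ha)).1 b (Finset.mem_sdiff.mp (hBt b hb)).1 hab
    · intro a ha b hb
      exact fun h => hBnone b hb a (hAsub ha) h.symm
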